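/- arXiv:2508.02891 — 4 statements merged into one kernel-verified Lean document; each statement's English description precedes it below -/
import Mathlib

section
/- For all vectors a_1,a_2,a_3,b_1,b_2,b_3,c_1,c_2,c_3 ∈ ℂ^4, writing A = a_1∧a_2∧a_3, B = b_1∧b_2∧b_3, C = c_1∧c_2∧c_3, the vector A*B*C ∈ ℂ^4 admits the two expansions: ⟨(a_1∧a_2)*B*C⟩·a_3 − ⟨(a_1∧a_3)*B*C⟩·a_2 + ⟨(a_2∧a_3)*B*C⟩·a_1 = ⟨A*B*(c_1∧c_2)⟩·c_3 − ⟨A*B*(c_1∧c_3)⟩·c_2 + ⟨A*B*(c_2∧c_3)⟩·c_1, where each bracket ⟨X*Y*Z⟩ denotes the scalar given by the iterated shuffle product (X*Y)*Z of total degree 8 = 2·4. -/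
noncomputable section

/-- Vectors in `ℂ^4`. -/
abbrev V4 := Fin 4 → ℂ

/-- `⟨u₁ u₂ u₃ u₄⟩`: the determinant of the `4 × 4` matrix with columns `u₁, u₂, u₃, u₄`. -/
def det4 (a b c d : V4) : ℂ :=
  Matrix.det (Matrix.of fun i j => ![a, b, c, d] j i)

/-- The scalar `⟨X * Y * Z⟩` given by the iterated shuffle product `(X * Y) * Z`
for blocks `X = (x₁,x₂)`, `Y = (y₁,y₂,y₃)`, `Z = (u₁,u₂,u₃)` of sizes `(2,3,3)`
(total degree `8 = 2·4`):
`Σ_{w ∈ S₃¹} sign(w)·⟨x₁ x₂ y_{w(2)} y_{w(3)}⟩·⟨y_{w(1)} u₁ u₂ u₃⟩`. -/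
def chain233 (x1 x2 y1 y2 y3 u1 u2 u3 : V4) : ℂ :=
  det4 x1 x2 y2 y3 * det4 y1 u1 u2 u3
    - det4 x1 x2 y1 y3 * det4 y2 u1 u2 u3
    + det4 x1 x2 y1 y2 * det4 y3 u1 u2 u3

/-- The scalar `⟨X * Y * Z⟩` given by the iterated shuffle product `(X * Y) * Z`
for blocks `X = (x₁,x₂,x₃)`, `Y = (y₁,y₂,y₃)`, `Z = (u₁,u₂)` of sizes `(3,3,2)`
(total degree `8 = 2·4`):
`Σ_{w ∈ S₃²} sign(w)·⟨x₁ x₂ x₃ y_{w(3)}⟩·⟨y_{w(1)} y_{w(2)} u₁ u₂⟩`. -/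
def chain332 (x1 x2 x3 y1 y2 y3 u1 u2 : V4) : ℂ :=
  det4 x1 x2 x3 y3 * det4 y1 y2 u1 u2
    - det4 x1 x2 x3 y2 * det4 y1 y3 u1 u2
    + det4 x1 x2 x3 y1 * det4 y2 y3 u1 u2

lemma det4_eq (a b c d : V4) : det4 a b c d =
    a 0 * (b 1 * (c 2 * d 3 - c 3 * d 2) - b 2 * (c 1 * d 3 - c 3 * d 1) + b 3 * (c 1 * d 2 - c 2 * d 1))
  - a 1 * (b 0 * (c 2 * d 3 - c 3 * d 2) - b 2 * (c 0 * d 3 - c 3 * d 0) + b 3 * (c 0 * d 2 - c 2 * d 0))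
  + a 2 * (b 0 * (c 1 * d 3 - c 3 * d 1) - b 1 * (c 0 * d 3 - c 3 * d 0) + b 3 * (c 0 * d 1 - c 1 * d 0))
  - a 3 * (b 0 * (c 1 * d 2 - c 2 * d 1) - b 1 * (c 0 * d 2 - c 2 * d 0) + b 2 * (c 0 * d 1 - c 1 * d 0)) := by
  have h1 : Fin.succ (2 : Fin 3) = 3 := rfl
  have h2 : Fin.castSucc (2 : Fin 3) = 2 := rfl
  simp [det4, Matrix.det_succ_row_zero, Fin.sum_univ_succ, Fin.succAbove, h1, h2]
  ring

set_option maxHeartbeats 1000000 in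
lemma cramer5 (p q r s t : V4) :
    det4 q r s t • p - det4 p r s t • q + det4 p q s t • r - det4 p q r t • s
      + det4 p q r s • t = 0 := by
  have e0 : (⟨0, by omega⟩ : Fin 4) = 0 := rfl
  have e1 : (⟨1, by omega⟩ : Fin 4) = 1 := rfl
  have e2 : (⟨2, by omega⟩ : Fin 4) = 2 := rfl
  have e3 : (⟨3, by omega⟩ : Fin 4) = 3 := rfl
  funext i
  fin_cases i <;>
  · simp only [det4_eq, Pi.add_apply, Pi.sub_apply, Pi.smul_apply, Pi.zero_apply, smul_eq_mul,
      e0, e1, e2, e3]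
    ring

set_option maxHeartbeats 1000000 in
/-- For all vectors `a₁,a₂,a₃,b₁,b₂,b₃,c₁,c₂,c₃ ∈ ℂ⁴`, writing
`A = a₁∧a₂∧a₃`, `B = b₁∧b₂∧b₃`, `C = c₁∧c₂∧c₃`, the vector `A * B * C ∈ ℂ⁴` admits the
two expansions:
`⟨(a₁∧a₂)*B*C⟩·a₃ − ⟨(a₁∧a₃)*B*C⟩·a₂ + ⟨(a₂∧a₃)*B*C⟩·a₁
  = ⟨A*B*(c₁∧c₂)⟩·c₃ − ⟨A*B*(c₁∧c₃)⟩·c₂ + ⟨A*B*(c₂∧c₃)⟩·c₁`,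
where each bracket `⟨X*Y*Z⟩` denotes the scalar given by the iterated shuffle product
`(X*Y)*Z` of total degree `8 = 2·4`. -/
theorem triple_shuffle_expansions (a1 a2 a3 b1 b2 b3 c1 c2 c3 : V4) :
    chain233 a1 a2 b1 b2 b3 c1 c2 c3 • a3
      - chain233 a1 a3 b1 b2 b3 c1 c2 c3 • a2
      + chain233 a2 a3 b1 b2 b3 c1 c2 c3 • a1
    = chain332 a1 a2 a3 b1 b2 b3 c1 c2 • c3
      - chain332 a1 a2 a3 b1 b2 b3 c1 c3 • c2
      + chain332 a1 a2 a3 b1 b2 b3 c2 c3 • c1 := by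
  simp only [chain233, chain332]
  linear_combination (norm := module)
    det4 b1 c1 c2 c3 • cramer5 a1 a2 a3 b2 b3
    - det4 b2 c1 c2 c3 • cramer5 a1 a2 a3 b1 b3
    + det4 b3 c1 c2 c3 • cramer5 a1 a2 a3 b1 b2
    - det4 a1 a2 a3 b3 • cramer5 b1 b2 c1 c2 c3
    + det4 a1 a2 a3 b2 • cramer5 b1 b3 c1 c2 c3
    - det4 a1 a2 a3 b1 • cramer5 b2 b3 c1 c2 c3

end
end

section
/- Let G be a finite leafless bipartite (multi)graph with black/white vertices and boundary vertices as described, suppose G has an acyclic reverse perfect orientation 𝒪 with source set I, and let (v, r) be an m-VRC on G. Then for every black vertex b of G, v_b = Σ_{i∈I} ( Σ_{P : i→b} wt(P) )·v_i, where the inner sum is over all directed paths P in 𝒪 from i to b (a finite set, by acyclicity), the empty path from b to b having weight 1, and wt(P) := (∏_{e∈P oriented black-to-white} r_e) / (∏_{e'∈P oriented white-to-black} (−r_{e'})). -/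
open scoped Classical

noncomputable section

variable {B W E : Type}

/-- One directed step of the orientation `o` of a bipartite graph with edge set `E`,
black endpoints `bEnd` and white endpoints `wEnd` (`o e = true` means the edge `e` is
directed from its black endpoint to its white endpoint). -/
def Step (bEnd : E → B) (wEnd : E → W) (o : E → Bool) : B ⊕ W → B ⊕ W → Prop
  | Sum.inl b, Sum.inr w => ∃ e, bEnd e = b ∧ wEnd e = w ∧ o e = true
  | Sum.inr w, Sum.inl b => ∃ e, bEnd e = b ∧ wEnd e = w ∧ o e = false
  | _, _ => False

/-- `IsDirPath bEnd wEnd o i l b`: the list of edges `l` is a directed walk in the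
orientation `o` from the black vertex `i` to the black vertex `b` (when the orientation
is acyclic, directed walks are exactly directed paths).  The empty list is the empty
path from `b` to `b`. -/
def IsDirPath (bEnd : E → B) (wEnd : E → W) (o : E → Bool) : B → List E → B → Prop
  | i, [], b => i = b
  | _, [_], _ => False
  | i, e₁ :: e₂ :: l, b =>
      bEnd e₁ = i ∧ o e₁ = true ∧ wEnd e₂ = wEnd e₁ ∧ o e₂ = false ∧
        IsDirPath bEnd wEnd o (bEnd e₂) l b

/-- The weight of a path: the product of `r e` over the edges of `l` oriented
black-to-white divided by the product of `−r e'` over the edges of `l` oriented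
white-to-black. -/
def pathWt (r : E → ℂ) (o : E → Bool) (l : List E) : ℂ :=
  ((l.filter fun e => o e).map r).prod /
    ((l.filter fun e => !o e).map fun e => -r e).prod

/-- A black vertex is a source of the orientation `o` if it has no incoming edge. -/
def IsSource (bEnd : E → B) (o : E → Bool) (b : B) : Prop :=
  ¬∃ e, bEnd e = b ∧ o e = false

section Aux
variable (bEnd : E → B) (wEnd : E → W) (o : E → Bool)

lemma dirPath_append : ∀ (l : List E) (i b' : B), IsDirPath bEnd wEnd o i l b' →
    ∀ e e' : E, bEnd e = b' → o e = true → wEnd e' = wEnd e → o e' = false →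
    IsDirPath bEnd wEnd o i (l ++ [e, e']) (bEnd e')
  | [], i, b', h, e, e', h1, h2, h3, h4 => by
      have hib : i = b' := h
      subst hib
      exact ⟨h1, h2, h3, h4, rfl⟩
  | [x], _, _, h, _, _, _, _, _, _ => h.elim
  | x :: y :: t, i, b', h, e, e', h1, h2, h3, h4 => by
      obtain ⟨g1, g2, g3, g4, g5⟩ := h
      exact ⟨g1, g2, g3, g4, dirPath_append t (bEnd y) b' g5 e e' h1 h2 h3 h4⟩

lemma dirPath_last : ∀ (l : List E) (i b : B), IsDirPath bEnd wEnd o i l b → l ≠ [] →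
    ∃ l' e e', l = l' ++ [e, e'] ∧ IsDirPath bEnd wEnd o i l' (bEnd e) ∧
      o e = true ∧ wEnd e' = wEnd e ∧ o e' = false ∧ bEnd e' = b
  | [], _, _, _, hne => (hne rfl).elim
  | [x], _, _, h, _ => h.elim
  | x :: y :: t, i, b, h, _ => by
      obtain ⟨g1, g2, g3, g4, g5⟩ := h
      cases t with
      | nil =>
          exact ⟨[], x, y, rfl, g1.symm, g2, g3, g4, g5⟩
      | cons a s =>
          obtain ⟨l', e, e', ht, hp, he1, he2, he3, he4⟩ :=
            dirPath_last (a :: s) (bEnd y) b g5 (by simp)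
          exact ⟨x :: y :: l', e, e', by simp [ht], ⟨g1, g2, g3, g4, hp⟩, he1, he2, he3, he4⟩

lemma pathWt_nil (r : E → ℂ) : pathWt r o [] = 1 := by simp [pathWt]

lemma pathWt_append (r : E → ℂ) (l₁ l₂ : List E) :
    pathWt r o (l₁ ++ l₂) = pathWt r o l₁ * pathWt r o l₂ := by
  simp [pathWt, List.filter_append, div_mul_div_comm]

lemma pathWt_pair (r : E → ℂ) (e e' : E) (he : o e = true) (he' : o e' = false) :
    pathWt r o [e, e'] = r e / (-r e') := by
  simp [pathWt, he, he']

lemma pathsFinite [Finite B] [Finite W] [Finite E]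
    (hacyc : ∀ x : B ⊕ W, ¬Relation.TransGen (Step bEnd wEnd o) x x) :
    ∀ i b : B, {l : List E | IsDirPath bEnd wEnd o i l b}.Finite := by
  set r : B → B → Prop :=
    fun x y => Relation.TransGen (Step bEnd wEnd o) (Sum.inl y) (Sum.inl x) with hr
  haveI : IsTrans B r := ⟨fun a b c h1 h2 => h2.trans h1⟩
  haveI : IsIrrefl B r := ⟨fun a h => hacyc _ h⟩
  have wf : WellFounded r := Finite.wellFounded_of_trans_of_irrefl r
  intro i b
  induction i using WellFounded.induction wf with
  | _ i IH =>
    have hsub : {l : List E | IsDirPath bEnd wEnd o i l b} ⊆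
        insert ([] : List E) (⋃ (e₁ : E) (e₂ : E),
          (fun t => e₁ :: e₂ :: t) ''
            {t | IsDirPath bEnd wEnd o (bEnd e₂) t b ∧ bEnd e₁ = i ∧ o e₁ = true ∧
              wEnd e₂ = wEnd e₁ ∧ o e₂ = false}) := by
      rintro l hl
      match l with
      | [] => exact Set.mem_insert _ _
      | [x] => exact hl.elim
      | x :: y :: t =>
          obtain ⟨g1, g2, g3, g4, g5⟩ := hl
          refine Set.mem_insert_of_mem _ ?_
          exact Set.mem_iUnion.2 ⟨x, Set.mem_iUnion.2 ⟨y, ⟨t, ⟨g5, g1, g2, g3, g4⟩, rfl⟩⟩⟩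
    refine Set.Finite.subset (Set.Finite.insert _ ?_) hsub
    refine Set.finite_iUnion fun e₁ => Set.finite_iUnion fun e₂ => Set.Finite.image _ ?_
    by_cases hc : bEnd e₁ = i ∧ o e₁ = true ∧ wEnd e₂ = wEnd e₁ ∧ o e₂ = false
    · obtain ⟨c1, c2, c3, c4⟩ := hc
      have hstep : r (bEnd e₂) i := by
        refine Relation.TransGen.head (b := Sum.inr (wEnd e₁)) ⟨e₁, c1, rfl, c2⟩ ?_
        exact Relation.TransGen.single ⟨e₂, rfl, c3, c4⟩
      exact Set.Finite.subset (IH _ hstep) fun t ht => ht.1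
    · exact Set.Finite.subset Set.finite_empty fun t ht =>
        hc ⟨ht.2.1, ht.2.2.1, ht.2.2.2.1, ht.2.2.2.2⟩

end Aux

/-- Let `G` be a finite leafless bipartite (multi)graph with black
vertices `B`, white vertices `W`, edges `E` (with endpoints `bEnd`, `wEnd`), and
boundary vertices `bd ⊆ B`, each of degree `1`, all internal vertices having degree at
least `2`.  Suppose `G` has an acyclic reverse perfect orientation `o` (every white
vertex has exactly one outgoing edge, every internal black vertex has exactly one
incoming edge, and there are no directed cycles) with source set `I`, and let `(v, r)`
be an `m`-VRC on `G`.  Then for every black vertex `b`,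
`v b = Σ_{i ∈ I} (Σ_{P : i → b} wt(P)) • v i`,
the inner sum being over all directed paths from `i` to `b` in the orientation. -/
theorem vrc_vectors_from_paths
    [Fintype B] [Fintype W] [Fintype E]
    (bEnd : E → B) (wEnd : E → W) (bd : Set B)
    (hbd_ne : bd.Nonempty)
    (hbd_deg : ∀ b ∈ bd, {e | bEnd e = b}.ncard = 1)
    (hleafB : ∀ b : B, b ∉ bd → 2 ≤ {e | bEnd e = b}.ncard)
    (hleafW : ∀ w : W, 2 ≤ {e | wEnd e = w}.ncard)
    (o : E → Bool)
    (hWout : ∀ w : W, ∃! e, wEnd e = w ∧ o e = false)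
    (hBin : ∀ b : B, b ∉ bd → ∃! e, bEnd e = b ∧ o e = false)
    (hacyc : ∀ x : B ⊕ W, ¬Relation.TransGen (Step bEnd wEnd o) x x)
    (m : ℕ) (hm : 1 ≤ m)
    (v : B → Fin m → ℂ) (r : E → ℂ)
    (hr : ∀ e, r e ≠ 0)
    (hspan : Submodule.span ℂ (v '' bd) = ⊤)
    (hrel : ∀ w : W,
      ∑ e ∈ Finset.univ.filter (fun e => wEnd e = w), r e • v (bEnd e) = 0) :
    ∀ b : B, v b =
      ∑ᶠ i ∈ {i : B | IsSource bEnd o i},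
        (∑ᶠ l ∈ {l : List E | IsDirPath bEnd wEnd o i l b}, pathWt r o l) • v i := by
  have hPF := pathsFinite bEnd wEnd o hacyc
  have hSrcFin : ({i : B | IsSource bEnd o i}).Finite := Set.toFinite _
  set rel2 : B → B → Prop :=
    fun x y => Relation.TransGen (Step bEnd wEnd o) (Sum.inl x) (Sum.inl y) with hrel2
  haveI : IsTrans B rel2 := ⟨fun a b c h1 h2 => h1.trans h2⟩
  haveI : IsIrrefl B rel2 := ⟨fun a h => hacyc _ h⟩
  have wf : WellFounded rel2 := Finite.wellFounded_of_trans_of_irrefl rel2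
  intro b
  induction b using WellFounded.induction wf with
  | _ b IH =>
  rw [finsum_mem_eq_finite_toFinset_sum _ hSrcFin]
  by_cases hsrc : IsSource bEnd o b
  · -- b is a source
    have hb : b ∈ hSrcFin.toFinset := hSrcFin.mem_toFinset.mpr hsrc
    have hzero : ∀ i ∈ hSrcFin.toFinset, i ≠ b →
        (∑ᶠ l ∈ {l : List E | IsDirPath bEnd wEnd o i l b}, pathWt r o l) • v i = 0 := by
      intro i hi hne
      have hempty : {l : List E | IsDirPath bEnd wEnd o i l b} = ∅ := by
        ext l
        simp only [Set.mem_setOf_eq, Set.mem_empty_iff_false, iff_false]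
        intro hl
        rcases eq_or_ne l [] with h | h
        · subst h; exact hne hl
        · obtain ⟨l', e, e', _, _, _, _, he3, he4⟩ := dirPath_last bEnd wEnd o l i b hl h
          exact hsrc ⟨e', he4, he3⟩
      rw [hempty, finsum_mem_empty, zero_smul]
    rw [Finset.sum_eq_single_of_mem b hb hzero]
    have hsingle : {l : List E | IsDirPath bEnd wEnd o b l b} = {[]} := by
      ext l
      simp only [Set.mem_setOf_eq, Set.mem_singleton_iff]
      constructor
      · intro hl
        rcases eq_or_ne l [] with h | h
        · exact h
        · obtain ⟨l', e, e', _, _, _, _, he3, he4⟩ := dirPath_last bEnd wEnd o l b b hl h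
          exact absurd ⟨e', he4, he3⟩ hsrc
      · rintro rfl; exact rfl
    rw [hsingle, finsum_mem_singleton, pathWt_nil, one_smul]
  · -- b is not a source
    obtain ⟨e0, he0b, he0o⟩ : ∃ e, bEnd e = b ∧ o e = false := not_not.mp hsrc
    set w : W := wEnd e0 with hw
    -- uniqueness of the incoming edge of b
    have huniq : ∀ e, bEnd e = b → o e = false → e = e0 := by
      intro e he hoe
      by_cases hbdb : b ∈ bd
      · obtain ⟨a, ha⟩ := Set.ncard_eq_one.mp (hbd_deg b hbdb)
        have h1 : e ∈ {e | bEnd e = b} := he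
        have h2 : e0 ∈ {e | bEnd e = b} := he0b
        rw [ha] at h1 h2
        rw [h1, h2]
      · obtain ⟨e', -, hu⟩ := hBin b hbdb
        rw [hu e ⟨he, hoe⟩, ← hu e0 ⟨he0b, he0o⟩]
    -- e0 is the unique outgoing edge of w
    obtain ⟨ew, -, hewu⟩ := hWout w
    have he0w : ∀ e, wEnd e = w → o e = false → e = e0 := by
      intro e h1 h2
      rw [hewu e ⟨h1, h2⟩, ← hewu e0 ⟨rfl, he0o⟩]
    set T : Finset E := (Finset.univ.filter (fun e => wEnd e = w)).erase e0 with hT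
    have hTprop : ∀ e ∈ T, wEnd e = w ∧ o e = true := by
      intro e he
      rw [hT, Finset.mem_erase, Finset.mem_filter] at he
      refine ⟨he.2.2, ?_⟩
      rcases Bool.eq_false_or_eq_true (o e) with h | h
      · exact h
      · exact absurd (he0w e he.2.2 h) he.1
    -- the relation at w solved for v b
    have he0mem : e0 ∈ Finset.univ.filter (fun e => wEnd e = w) := by
      simp [hw]
    have hrw : r e0 • v b + ∑ e ∈ T, r e • v (bEnd e) = 0 := by
      have := hrel w
      rw [← Finset.add_sum_erase _ _ he0mem, he0b] at this
      exact this
    have hne0 : (-r e0) ≠ 0 := neg_ne_zero.mpr (hr e0)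
    have hsum : ∑ e ∈ T, r e • v (bEnd e) = (-r e0) • v b := by
      rw [eq_neg_of_add_eq_zero_right hrw, neg_smul]
    have hvb : v b = ∑ e ∈ T, (r e / (-r e0)) • v (bEnd e) := by
      have h1 : (-r e0)⁻¹ • ((-r e0) • v b) = v b := by
        rw [smul_smul, inv_mul_cancel₀ hne0, one_smul]
      rw [← h1, ← hsum, Finset.smul_sum]
      refine Finset.sum_congr rfl fun e he => ?_
      rw [smul_smul, div_eq_mul_inv, mul_comm]
    -- each bEnd e, e ∈ T, is strictly upstream of b
    have hstep : ∀ e ∈ T, rel2 (bEnd e) b := by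
      intro e he
      refine Relation.TransGen.head (b := Sum.inr w) ⟨e, rfl, (hTprop e he).1, (hTprop e he).2⟩ ?_
      exact Relation.TransGen.single ⟨e0, he0b, rfl, he0o⟩
    -- rewrite via IH and swap sums
    have hIH : ∀ e ∈ T, v (bEnd e) = ∑ i ∈ hSrcFin.toFinset,
        (∑ᶠ l ∈ {l : List E | IsDirPath bEnd wEnd o i l (bEnd e)}, pathWt r o l) • v i := by
      intro e he
      rw [IH (bEnd e) (hstep e he), finsum_mem_eq_finite_toFinset_sum _ hSrcFin]
    calc v b = ∑ e ∈ T, (r e / (-r e0)) • v (bEnd e) := hvb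
      _ = ∑ e ∈ T, ∑ i ∈ hSrcFin.toFinset,
            ((r e / (-r e0)) * (∑ᶠ l ∈ {l : List E | IsDirPath bEnd wEnd o i l (bEnd e)},
              pathWt r o l)) • v i := by
          refine Finset.sum_congr rfl fun e he => ?_
          rw [hIH e he, Finset.smul_sum]
          exact Finset.sum_congr rfl fun i _ => by rw [smul_smul]
      _ = ∑ i ∈ hSrcFin.toFinset,
            (∑ e ∈ T, (r e / (-r e0)) * (∑ᶠ l ∈ {l : List E | IsDirPath bEnd wEnd o i l (bEnd e)},
              pathWt r o l)) • v i := by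
          rw [Finset.sum_comm]
          exact Finset.sum_congr rfl fun i _ => by rw [Finset.sum_smul]
      _ = ∑ i ∈ hSrcFin.toFinset,
            (∑ᶠ l ∈ {l : List E | IsDirPath bEnd wEnd o i l b}, pathWt r o l) • v i := by
          refine Finset.sum_congr rfl fun i hi => ?_
          congr 1
          -- the key path-decomposition identity
          have hiS : IsSource bEnd o i := hSrcFin.mem_toFinset.mp hi
          have hib : i ≠ b := fun h => hsrc (h ▸ hiS)
          have hbiU : (hPF i b).toFinset =
              T.biUnion (fun e => ((hPF i (bEnd e)).toFinset).image (fun l => l ++ [e, e0])) := by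
            ext l
            simp only [Set.Finite.mem_toFinset, Set.mem_setOf_eq, Finset.mem_biUnion,
              Finset.mem_image]
            constructor
            · intro hl
              have hlne : l ≠ [] := by
                rintro rfl; exact hib hl
              obtain ⟨l', e, e', hle, hp, he1, he2, he3, he4⟩ :=
                dirPath_last bEnd wEnd o l i b hl hlne
              have he'0 : e' = e0 := huniq e' he4 he3
              subst he'0
              have heT : e ∈ T := by
                rw [hT, Finset.mem_erase, Finset.mem_filter]
                refine ⟨fun h => ?_, Finset.mem_univ e, he2.symm⟩
                subst h
                rw [he0o] at he1
                exact Bool.false_ne_true he1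
              exact ⟨e, heT, l', hp, hle.symm⟩
            · rintro ⟨e, heT, l', hl', rfl⟩
              have h := dirPath_append bEnd wEnd o l' i (bEnd e) hl' e e0 rfl
                (hTprop e heT).2 (((hTprop e heT).1).symm ▸ hw.symm) he0o
              rwa [he0b] at h
          have hdisj : Set.PairwiseDisjoint (↑T)
              (fun e => ((hPF i (bEnd e)).toFinset).image (fun l => l ++ [e, e0])) := by
            intro e1 h1 e2 h2 hne
            refine Finset.disjoint_left.mpr ?_
            rintro a ha1 ha2
            simp only [Finset.mem_image] at ha1 ha2
            obtain ⟨l1, -, hl1⟩ := ha1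
            obtain ⟨l2, -, hl2⟩ := ha2
            have := hl1.trans hl2.symm
            have h12 := (List.append_inj' this (by simp)).2
            simp only [List.cons.injEq] at h12
            exact hne h12.1
          rw [finsum_mem_eq_finite_toFinset_sum _ (hPF i b), hbiU, Finset.sum_biUnion hdisj]
          refine Finset.sum_congr rfl fun e he => ?_
          rw [Finset.sum_image (by
            intro x _ y _ hxy
            exact (List.append_inj' hxy (by simp)).1)]
          rw [finsum_mem_eq_finite_toFinset_sum _ (hPF i (bEnd e)), Finset.mul_sum]
          refine Finset.sum_congr rfl fun l hl => ?_
          rw [pathWt_append, pathWt_pair o r e e0 (hTprop e he).2 he0o, mul_comm]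

end
end

section
/- Let G be a finite leafless bipartite (multi)graph with black/white vertices and boundary vertices as described, and suppose G admits an acyclic reverse perfect orientation. If (v, r) and (v', r') are m-VRCs on G with r_e = r'_e for every edge e and v_i = v'_i for every boundary vertex i ∈ B_bd, then v_b = v'_b for every black vertex b. In other words, the vectors of an m-VRC on G are determined by its boundary vectors and its edge coefficients. -/
open scoped Classical

noncomputable section

variable {B W E : Type}

/-- Let `G` be a finite leafless bipartite (multi)graph with black
vertices `B`, white vertices `W`, edges `E` (with endpoints `bEnd`, `wEnd`), and
boundary vertices `bd ⊆ B`, each of degree `1`, all internal vertices having degree at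
least `2`.  Suppose `G` admits an acyclic reverse perfect orientation.  If `(v, r)` and
`(v', r')` are `m`-VRCs on `G` with `r e = r' e` for every edge `e` and `v i = v' i` for
every boundary vertex `i ∈ bd`, then `v b = v' b` for every black vertex `b`: the
vectors of an `m`-VRC are determined by its boundary vectors and edge coefficients. -/
theorem vrc_determined_by_boundary_and_coefficients
    [Fintype B] [Fintype W] [Fintype E]
    (bEnd : E → B) (wEnd : E → W) (bd : Set B)
    (hbd_ne : bd.Nonempty)
    (hbd_deg : ∀ b ∈ bd, {e | bEnd e = b}.ncard = 1)
    (hleafB : ∀ b : B, b ∉ bd → 2 ≤ {e | bEnd e = b}.ncard)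
    (hleafW : ∀ w : W, 2 ≤ {e | wEnd e = w}.ncard)
    (horient : ∃ o : E → Bool,
      (∀ w : W, ∃! e, wEnd e = w ∧ o e = false) ∧
      (∀ b : B, b ∉ bd → ∃! e, bEnd e = b ∧ o e = false) ∧
      (∀ x : B ⊕ W, ¬Relation.TransGen (Step bEnd wEnd o) x x))
    (m : ℕ) (hm : 1 ≤ m)
    (v v' : B → Fin m → ℂ) (r r' : E → ℂ)
    (hr : ∀ e, r e ≠ 0) (hr' : ∀ e, r' e ≠ 0)
    (hspan : Submodule.span ℂ (v '' bd) = ⊤)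
    (hspan' : Submodule.span ℂ (v' '' bd) = ⊤)
    (hrel : ∀ w : W,
      ∑ e ∈ Finset.univ.filter (fun e => wEnd e = w), r e • v (bEnd e) = 0)
    (hrel' : ∀ w : W,
      ∑ e ∈ Finset.univ.filter (fun e => wEnd e = w), r' e • v' (bEnd e) = 0)
    (hcoeff : ∀ e, r e = r' e)
    (hbdv : ∀ i ∈ bd, v i = v' i) :
    ∀ b : B, v b = v' b := by
  obtain ⟨o, hw, hb, hacyc⟩ := horient
  have htrans : Transitive (fun x y : B ⊕ W => Relation.TransGen (Step bEnd wEnd o) x y) :=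
    fun _ _ _ h1 h2 => h1.trans h2
  haveI : IsTrans (B ⊕ W) (fun x y => Relation.TransGen (Step bEnd wEnd o) x y) :=
    ⟨fun _ _ _ => Relation.TransGen.trans⟩
  haveI : IsIrrefl (B ⊕ W) (fun x y => Relation.TransGen (Step bEnd wEnd o) x y) :=
    ⟨hacyc⟩
  have hwf : WellFounded (fun x y : B ⊕ W => Relation.TransGen (Step bEnd wEnd o) x y) :=
    Finite.wellFounded_of_trans_of_irrefl _
  have key : ∀ x : B ⊕ W, ∀ b : B, x = Sum.inl b → v b = v' b := by
    intro x
    induction x using hwf.induction with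
    | _ x IH =>
      rintro b rfl
      by_cases hbdb : b ∈ bd
      · exact hbdv b hbdb
      · obtain ⟨e0, ⟨hbe0, ho0⟩, _⟩ := hb b hbdb
        set w := wEnd e0 with hwdef
        obtain ⟨e1, ⟨hwe1, ho1⟩, huniq⟩ := hw w
        have he01 : e0 = e1 := huniq e0 ⟨rfl, ho0⟩
        have honly : ∀ e, wEnd e = w → e ≠ e0 → o e = true := by
          intro e hwe hne
          cases h : o e with
          | true => rfl
          | false => exact absurd ((huniq e ⟨hwe, h⟩).trans he01.symm) hne
        have hIH : ∀ e, wEnd e = w → e ≠ e0 → v (bEnd e) = v' (bEnd e) := by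
          intro e hwe hne
          refine IH (Sum.inl (bEnd e)) ?_ (bEnd e) rfl
          have s1 : Step bEnd wEnd o (Sum.inl (bEnd e)) (Sum.inr w) :=
            ⟨e, rfl, hwe, honly e hwe hne⟩
          have s2 : Step bEnd wEnd o (Sum.inr w) (Sum.inl b) := ⟨e0, hbe0, rfl, ho0⟩
          exact Relation.TransGen.head s1 (Relation.TransGen.single s2)
        have hsub : ∑ e ∈ Finset.univ.filter (fun e => wEnd e = w),
            r e • (v (bEnd e) - v' (bEnd e)) = 0 := by
          have hv' : ∑ e ∈ Finset.univ.filter (fun e => wEnd e = w),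
              r e • v' (bEnd e) = 0 := by
            rw [show (fun e => r e • v' (bEnd e)) = (fun e => r' e • v' (bEnd e)) from
              funext fun e => by rw [hcoeff]]
            exact hrel' w
          simp only [smul_sub, Finset.sum_sub_distrib, hrel w, hv', sub_zero]
        have he0mem : e0 ∈ Finset.univ.filter (fun e => wEnd e = w) := by
          exact Finset.mem_filter.mpr ⟨Finset.mem_univ _, rfl⟩
        have hsum := Finset.sum_eq_single_of_mem
          (f := fun e => r e • (v (bEnd e) - v' (bEnd e))) e0 he0mem
          (fun e he hne => by
            show r e • (v (bEnd e) - v' (bEnd e)) = 0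
            rw [hIH e (Finset.mem_filter.mp he).2 hne, sub_self, smul_zero])
        have hsingle : r e0 • (v (bEnd e0) - v' (bEnd e0)) = 0 := hsum.symm.trans hsub
        rw [hbe0] at hsingle
        rcases smul_eq_zero.mp hsingle with h | h
        · exact absurd h (hr e0)
        · exact sub_eq_zero.mp h
  intro b
  exact key (Sum.inl b) b rfl

end
end

section
/- Let G be a finite tree, properly 2-colored black/white, whose leaves are exactly the black boundary vertices 1,…,n; fix an internal vertex r, vectors z_1,…,z_n ∈ ℂ^m, and define the subspaces V_x ⊆ ℂ^m for all vertices x recursively toward the root r as described (span at boundary leaves, sum of children's subspaces at white vertices, intersection of children's subspaces at black vertices). If (v, r_e) is an m-vector-relation configuration on G whose boundary vectors satisfy v_i = z_i for every boundary vertex i = 1,…,n, then for every black vertex b of G, the vector v_b lies in the subspace V_b. -/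
open scoped Classical

noncomputable section

/-- Let `G` be a finite tree, properly 2-colored black/white
(`color x = true` means `x` is black), whose leaves are exactly the black boundary
vertices `ι 1, …, ι n`; fix an internal vertex `r`, vectors `z 1, …, z n ∈ ℂ^m`, and let
`U x ⊆ ℂ^m` (for vertices `x`) be the family of subspaces defined recursively toward the
root `r`: `U (ι i) = span(z i)` at boundary leaves, `U x = Σ_{y child of x} U y` at white
vertices and `U x = ∩_{y child of x} U y` at internal black vertices, where the children
of `x` are its neighbors `y` with `dist r y = dist r x + 1`.  If `(v, re)` is an
`m`-vector-relation configuration on `G` whose boundary vectors satisfy `v (ι i) = z i`,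
then for every black vertex `b` of `G`, the vector `v b` lies in the subspace `U b`. -/
theorem vrc_vectors_in_recursive_subspaces
    {V : Type} [Fintype V] (G : SimpleGraph V) (htree : G.IsTree)
    (color : V → Bool)
    (hproper : ∀ x y : V, G.Adj x y → color x ≠ color y)
    (n : ℕ) (ι : Fin n → V) (hι : Function.Injective ι)
    (hleaf : ∀ x : V, ({y | G.Adj x y}.ncard = 1 ↔ ∃ i, ι i = x))
    (hblack : ∀ i : Fin n, color (ι i) = true)
    (r : V) (hr : ¬∃ i, ι i = r)
    (m : ℕ) (hm : 1 ≤ m)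
    (z : Fin n → Fin m → ℂ)
    (U : V → Submodule ℂ (Fin m → ℂ))
    (hUleaf : ∀ i : Fin n, U (ι i) = Submodule.span ℂ {z i})
    (hUwhite : ∀ x : V, color x = false →
      U x = ⨆ y ∈ {y | G.Adj x y ∧ G.dist r y = G.dist r x + 1}, U y)
    (hUblack : ∀ x : V, color x = true → (¬∃ i, ι i = x) →
      U x = ⨅ y ∈ {y | G.Adj x y ∧ G.dist r y = G.dist r x + 1}, U y)
    (v : V → Fin m → ℂ) (re : Sym2 V → ℂ)
    (hre : ∀ e ∈ G.edgeSet, re e ≠ 0)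
    (hrel : ∀ w : V, color w = false → ∑ᶠ b ∈ {b | G.Adj w b}, re s(w, b) • v b = 0)
    (hbdry : ∀ i : Fin n, v (ι i) = z i) :
    ∀ b : V, color b = true → v b ∈ U b := by
  classical
  have hconn : G.Connected := htree.isConnected
  -- colors along a walk are determined by parity of length
  have hcol : ∀ (u x : V) (p : G.Walk u x), (color x = color u ↔ Even p.length) := by
    intro u x p
    induction p with
    | nil => simp
    | @cons u y x h q ih =>
      have hne := hproper _ _ h
      rw [SimpleGraph.Walk.length_cons, Nat.even_add_one, ← ih]
      revert hne
      cases color u <;> cases color y <;> cases color x <;> simp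
  have hdist_lt : ∀ x : V, G.dist r x < Fintype.card V := by
    intro x
    obtain ⟨p, hp, hl⟩ := hconn.exists_path_of_dist r x
    calc G.dist r x = p.length := hl.symm
      _ < Fintype.card V := hp.length_lt
  have hparity : ∀ x : V, (color x = color r ↔ Even (G.dist r x)) := by
    intro x
    obtain ⟨p, hp, hl⟩ := hconn.exists_path_of_dist r x
    rw [← hl]
    exact hcol r x p
  have hstep : ∀ x y : V, G.Adj x y →
      G.dist r y = G.dist r x + 1 ∨ G.dist r x = G.dist r y + 1 := by
    intro x y h
    have hxy1 : G.dist x y = 1 := SimpleGraph.dist_eq_one_iff_adj.mpr h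
    have hyx1 : G.dist y x = 1 := SimpleGraph.dist_eq_one_iff_adj.mpr h.symm
    have h1 : G.dist r y ≤ G.dist r x + 1 := by
      have := hconn.dist_triangle (u := r) (v := x) (w := y); omega
    have h2 : G.dist r x ≤ G.dist r y + 1 := by
      have := hconn.dist_triangle (u := r) (v := y) (w := x); omega
    have hne : G.dist r x ≠ G.dist r y := by
      intro he
      have hpx := hparity x
      have hpy := hparity y
      rw [he] at hpx
      have hcxy : color x = color y := by
        have hne' := hproper x y h
        revert hpx hpy hne'
        cases color x <;> cases color y <;> cases color r <;> simp <;> tauto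
      exact hproper x y h hcxy
    omega
  -- unique parent: other neighbors of a child are grandchildren
  have hparent : ∀ b w y : V, G.Adj b w → G.dist r w = G.dist r b + 1 →
      G.Adj w y → y ≠ b → G.dist r y = G.dist r w + 1 := by
    intro b w y hbw hdw hwy hyb
    rcases hstep w y hwy with h | h
    · exact h
    · exfalso
      have hyd : G.dist r y = G.dist r b := by omega
      obtain ⟨pb, hpb, hpbl⟩ := hconn.exists_path_of_dist r b
      obtain ⟨py, hpy, hpyl⟩ := hconn.exists_path_of_dist r y
      have hnb : w ∉ pb.support := by
        intro hw'
        have h1 := pb.length_takeUntil_le hw'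
        have h2 := G.dist_le (pb.takeUntil w hw')
        omega
      have hny : w ∉ py.support := by
        intro hw'
        have h1 := py.length_takeUntil_le hw'
        have h2 := G.dist_le (py.takeUntil w hw')
        omega
      have hqb : (SimpleGraph.Walk.cons hbw.symm pb.reverse).IsPath := by
        refine hpb.reverse.cons ?_
        rw [SimpleGraph.Walk.support_reverse, List.mem_reverse]
        exact hnb
      have hqy : (SimpleGraph.Walk.cons hwy py.reverse).IsPath := by
        refine hpy.reverse.cons ?_
        rw [SimpleGraph.Walk.support_reverse, List.mem_reverse]
        exact hny
      obtain ⟨q, -, huniq⟩ := htree.existsUnique_path w r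
      have he : SimpleGraph.Walk.cons hbw.symm pb.reverse
          = SimpleGraph.Walk.cons hwy py.reverse := by
        rw [huniq _ hqb, huniq _ hqy]
      have hb1 : (SimpleGraph.Walk.cons hbw.symm pb.reverse).getVert 1 = b := by simp
      have hy1 : (SimpleGraph.Walk.cons hwy py.reverse).getVert 1 = y := by simp
      rw [he] at hb1
      rw [hy1] at hb1
      exact hyb hb1
  have main : ∀ k : ℕ, ∀ b : V, color b = true →
      Fintype.card V ≤ G.dist r b + k → v b ∈ U b := by
    intro k
    induction k with
    | zero =>
      intro b _ hle
      have := hdist_lt b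
      omega
    | succ k ih =>
      intro b hb hle
      by_cases hbleaf : ∃ i, ι i = b
      · obtain ⟨i, rfl⟩ := hbleaf
        rw [hUleaf i, hbdry i]
        exact Submodule.mem_span_singleton_self _
      · rw [hUblack b hb hbleaf]
        simp only [Submodule.mem_iInf]
        intro w hw
        obtain ⟨hbw, hdw⟩ := hw
        have hwcol : color w = false := by
          have := hproper b w hbw
          cases hcw : color w
          · rfl
          · rw [hb, hcw] at this; exact absurd rfl this
        have hrelw := hrel w hwcol
        have hset : {b' | G.Adj w b'} = ↑(G.neighborFinset w) := by
          ext y; simp [SimpleGraph.mem_neighborFinset]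
        rw [hset, finsum_mem_coe_finset] at hrelw
        have hbmem : b ∈ G.neighborFinset w := by
          rw [SimpleGraph.mem_neighborFinset]; exact hbw.symm
        rw [← Finset.add_sum_erase _ _ hbmem] at hrelw
        have hsum : ∀ b' ∈ (G.neighborFinset w).erase b,
            re s(w, b') • v b' ∈ U w := by
          intro b' hb'
          obtain ⟨hne, hmem⟩ := Finset.mem_erase.mp hb'
          have hadj : G.Adj w b' := (SimpleGraph.mem_neighborFinset _ _ _).mp hmem
          have hd' : G.dist r b' = G.dist r w + 1 := hparent b w b' hbw hdw hadj hne
          have hcol' : color b' = true := by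
            have := hproper w b' hadj
            cases hcb : color b'
            · rw [hwcol, hcb] at this; exact absurd rfl this
            · rfl
          have hv' : v b' ∈ U b' := ih b' hcol' (by omega)
          have hle' : U b' ≤ U w := by
            rw [hUwhite w hwcol]
            exact le_iSup_of_le b' (le_iSup_of_le ⟨hadj, hd'⟩ le_rfl)
          exact Submodule.smul_mem _ _ (hle' hv')
        have heq : re s(w, b) • v b
            = -∑ b' ∈ (G.neighborFinset w).erase b, re s(w, b') • v b' := by
          rw [eq_neg_iff_add_eq_zero]; exact hrelw
        have hx : re s(w, b) • v b ∈ U w := by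
          rw [heq]
          exact Submodule.neg_mem _ (Submodule.sum_mem _ hsum)
        have hre0 : re s(w, b) ≠ 0 := by
          apply hre
          rw [SimpleGraph.mem_edgeSet]
          exact hbw.symm
        have := Submodule.smul_mem (U w) (re s(w, b))⁻¹ hx
        rwa [smul_smul, inv_mul_cancel₀ hre0, one_smul] at this
  intro b hb
  exact main (Fintype.card V) b hb (Nat.le_add_left _ _)

end
end
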